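/- Let N be a positive integer and A a nonempty finite subset of ℤ_N. Define the Fourier bias ‖A‖_U = sup over nonzero ξ ∈ ℤ_N of |(1/N) · Σ_{a ∈ A} exp(-2πi·a·ξ/N)|, and the additive energy E(A,A) = #{(a,b,a',b') ∈ A×A×A×A : a + b = a' + b' in ℤ_N}. Then E(A,A)/N³ − (|A|/N)⁴ ≤ ‖A‖_U² · (|A|/N). -/

import Mathlib

open Finset ZMod Complex
open scoped ComplexConjugate


/-- Fourier bias of a finite subset `A` of `ℤ_N`:
`‖A‖_U = sup_{ξ ≠ 0} |(1/N) ∑_{a ∈ A} exp(-2πi a ξ / N)|`. -/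
noncomputable def fourierBias (N : ℕ) (A : Finset (ZMod N)) : ℝ :=
  ⨆ ξ : {ξ : ZMod N // ξ ≠ 0},
    ‖(N : ℂ)⁻¹ * ∑ a ∈ A,
      Complex.exp (-(2 * (Real.pi : ℂ) * Complex.I * ((a.val * ξ.1.val : ℕ) : ℂ) / (N : ℂ)))‖

/-- Additive energy `E(A,A) = #{(a,b,a',b') ∈ A⁴ : a + b = a' + b'}`. -/
def addEnergy (N : ℕ) (A : Finset (ZMod N)) : ℕ :=
  ((A ×ˢ A ×ˢ A ×ˢ A).filter
    (fun x => x.1 + x.2.1 = x.2.2.1 + x.2.2.2)).card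


section aux
variable {N : ℕ} [NeZero N]

lemma conj_stdAddChar (x : ZMod N) : conj (stdAddChar x) = stdAddChar (-x) := by
  rw [AddChar.map_neg_eq_inv, Complex.inv_eq_conj]
  rw [ZMod.stdAddChar_apply]
  exact Circle.norm_coe _

lemma sum_stdAddChar_mul (t : ZMod N) :
    ∑ ξ : ZMod N, stdAddChar (t * ξ) = if t = 0 then (N : ℂ) else 0 := by
  split_ifs with h
  · simp only [h, zero_mul, AddChar.map_zero_eq_one, sum_const, card_univ, ZMod.card,
      nsmul_eq_mul, mul_one]
  · exact AddChar.sum_eq_zero_of_ne_one (ZMod.isPrimitive_stdAddChar N h)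

lemma exp_eq_stdAddChar (a ξ : ZMod N) :
    Complex.exp (-(2 * (Real.pi : ℂ) * Complex.I * ((a.val * ξ.val : ℕ) : ℂ) / (N : ℂ)))
      = stdAddChar (-(a * ξ)) := by
  have h := ZMod.stdAddChar_coe (N := N) (-(a.val * ξ.val : ℕ) : ℤ)
  have h2 : ((-(a.val * ξ.val : ℕ) : ℤ) : ZMod N) = -(a * ξ) := by
    push_cast
    rw [ZMod.natCast_val, ZMod.natCast_val, ZMod.cast_id, ZMod.cast_id]
  rw [h2] at h
  rw [h]
  congr 1
  push_cast
  ring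

end aux

/-- `E(A,A)/N³ − (|A|/N)⁴ ≤ ‖A‖_U² · (|A|/N)`. -/
theorem energy_le_fourierBias_sq (N : ℕ) (hN : 0 < N) (A : Finset (ZMod N))
    (hA : A.Nonempty) :
    (addEnergy N A : ℝ) / (N : ℝ) ^ 3 - ((A.card : ℝ) / N) ^ 4
      ≤ fourierBias N A ^ 2 * ((A.card : ℝ) / N) := by
  haveI : NeZero N := ⟨hN.ne'⟩
  set F : ZMod N → ℂ := fun ξ => ∑ a ∈ A, stdAddChar (-(a * ξ)) with hF
  have hNR : (0 : ℝ) < N := by exact_mod_cast hN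
  -- conj of F
  have hconj : ∀ ξ, conj (F ξ) = ∑ a ∈ A, stdAddChar (a * ξ) := by
    intro ξ
    rw [hF, map_sum]
    exact Finset.sum_congr rfl fun a _ => by rw [conj_stdAddChar, neg_neg]
  -- energy identity
  have key : ∑ ξ : ZMod N, ((Complex.normSq (F ξ) : ℂ))^2 = (N : ℂ) * (addEnergy N A : ℂ) := by
    have expand : ∀ ξ : ZMod N, ((Complex.normSq (F ξ) : ℂ))^2
        = ∑ x ∈ A ×ˢ A ×ˢ A ×ˢ A,
            stdAddChar (((x.1 + x.2.1) - (x.2.2.1 + x.2.2.2)) * ξ) := by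
      intro ξ
      rw [← Complex.mul_conj (F ξ)]
      rw [mul_pow, sq, sq, hconj, hF]
      simp only [Finset.sum_product, Finset.sum_mul, Finset.mul_sum]
      refine Finset.sum_congr rfl fun a _ => Finset.sum_congr rfl fun b _ =>
        Finset.sum_congr rfl fun c _ => Finset.sum_congr rfl fun d _ => ?_
      rw [← AddChar.map_add_eq_mul, ← AddChar.map_add_eq_mul, ← AddChar.map_add_eq_mul]
      congr 1
      ring
    rw [Finset.sum_congr rfl fun ξ _ => expand ξ, Finset.sum_comm]
    have horth : ∀ x : ZMod N × ZMod N × ZMod N × ZMod N,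
        ∑ ξ : ZMod N, stdAddChar (((x.1 + x.2.1) - (x.2.2.1 + x.2.2.2)) * ξ)
          = if x.1 + x.2.1 = x.2.2.1 + x.2.2.2 then (N : ℂ) else 0 := by
      intro x
      rw [sum_stdAddChar_mul]
      congr 1
      simp [sub_eq_zero]
    rw [Finset.sum_congr rfl fun x _ => horth x]
    rw [Finset.sum_ite, Finset.sum_const, Finset.sum_const_zero, add_zero, nsmul_eq_mul]
    rw [mul_comm]
    rfl
  -- Parseval
  have parseval : ∑ ξ : ZMod N, ((Complex.normSq (F ξ) : ℂ)) = (N : ℂ) * (A.card : ℂ) := by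
    have expand : ∀ ξ : ZMod N, ((Complex.normSq (F ξ) : ℂ))
        = ∑ x ∈ A ×ˢ A, stdAddChar ((x.1 - x.2) * ξ) := by
      intro ξ
      rw [← Complex.mul_conj (F ξ), hconj, hF]
      simp only [Finset.sum_product, Finset.sum_mul, Finset.mul_sum]
      refine Finset.sum_congr rfl fun a _ => Finset.sum_congr rfl fun b _ => ?_
      rw [← AddChar.map_add_eq_mul]
      congr 1
      ring
    rw [Finset.sum_congr rfl fun ξ _ => expand ξ, Finset.sum_comm]
    have horth : ∀ x : ZMod N × ZMod N,
        ∑ ξ : ZMod N, stdAddChar ((x.1 - x.2) * ξ) = if x.1 = x.2 then (N : ℂ) else 0 := by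
      intro x
      rw [sum_stdAddChar_mul]
      congr 1
      simp [sub_eq_zero]
    rw [Finset.sum_congr rfl fun x _ => horth x]
    rw [Finset.sum_ite, Finset.sum_const, Finset.sum_const_zero, add_zero, nsmul_eq_mul, mul_comm]
    congr 2
    rw [show (A ×ˢ A).filter (fun x => x.1 = x.2) = A.image (fun a => (a, a)) from ?_]
    · rw [Finset.card_image_of_injective _ (fun a b h => congrArg Prod.fst h)]
    · ext ⟨a, b⟩
      simp only [Finset.mem_filter, Finset.mem_product, Finset.mem_image, Prod.mk.injEq]
      constructor
      · rintro ⟨⟨ha, _⟩, rfl⟩; exact ⟨a, ha, rfl, rfl⟩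
      · rintro ⟨c, hc, rfl, rfl⟩; exact ⟨⟨hc, hc⟩, rfl⟩
  -- real versions
  have keyR : ∑ ξ : ZMod N, (Complex.normSq (F ξ))^2 = (N : ℝ) * (_root_.addEnergy N A : ℝ) := by
    exact_mod_cast key
  have parsevalR : ∑ ξ : ZMod N, Complex.normSq (F ξ) = (N : ℝ) * (A.card : ℝ) := by
    exact_mod_cast parseval
  -- F 0 = card
  have hF0 : F 0 = (A.card : ℂ) := by
    simp [hF]
  -- bias bound
  have hbias : ∀ ξ : ZMod N, ξ ≠ 0 → ‖F ξ‖ / N ≤ fourierBias N A := by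
    intro ξ hξ
    have : ‖(N : ℂ)⁻¹ * ∑ a ∈ A,
        Complex.exp (-(2 * (Real.pi : ℂ) * Complex.I * ((a.val * ξ.val : ℕ) : ℂ) / (N : ℂ)))‖
        = ‖F ξ‖ / N := by
      rw [Finset.sum_congr rfl fun a _ => exp_eq_stdAddChar a ξ]
      rw [norm_mul, norm_inv, Complex.norm_natCast]
      rw [div_eq_inv_mul]
    rw [← this]
    unfold fourierBias
    exact le_ciSup (f := fun ξ : {ξ : ZMod N // ξ ≠ 0} =>
        ‖(N : ℂ)⁻¹ * ∑ a ∈ A,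
          Complex.exp (-(2 * (Real.pi : ℂ) * Complex.I *
            ((a.val * ξ.1.val : ℕ) : ℂ) / (N : ℂ)))‖)
      (Set.Finite.bddAbove (Set.finite_range _)) ⟨ξ, hξ⟩
  have hbias0 : 0 ≤ fourierBias N A := Real.iSup_nonneg fun ξ => by positivity
  -- main estimate
  have step1 : (addEnergy N A : ℝ) / (N : ℝ) ^ 3 - ((A.card : ℝ) / N) ^ 4
      = ∑ ξ ∈ Finset.univ.erase (0 : ZMod N), (Complex.normSq (F ξ) / (N:ℝ)^2)^2 := by
    have hsplit : Complex.normSq (F 0)^2 + ∑ ξ ∈ Finset.univ.erase (0 : ZMod N),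
        (Complex.normSq (F ξ))^2 = ∑ ξ : ZMod N, (Complex.normSq (F ξ))^2 :=
      Finset.add_sum_erase Finset.univ (fun ξ => (Complex.normSq (F ξ))^2)
        (Finset.mem_univ (0 : ZMod N))
    have h0 : Complex.normSq (F 0) = (A.card : ℝ)^2 := by
      rw [hF0, Complex.normSq_natCast]; push_cast; ring
    rw [keyR] at hsplit
    have : ∑ ξ ∈ Finset.univ.erase (0 : ZMod N), (Complex.normSq (F ξ))^2
        = (N : ℝ) * addEnergy N A - (A.card : ℝ)^4 := by
      rw [← hsplit, h0]; ring
    rw [Finset.sum_congr rfl fun ξ _ => div_pow _ _ 2, ← Finset.sum_div, this]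
    field_simp
  rw [step1]
  have step2 : ∑ ξ ∈ Finset.univ.erase (0 : ZMod N), (Complex.normSq (F ξ) / (N:ℝ)^2)^2
      ≤ fourierBias N A ^ 2 * ∑ ξ ∈ Finset.univ.erase (0 : ZMod N),
          Complex.normSq (F ξ) / (N:ℝ)^2 := by
    rw [Finset.mul_sum]
    refine Finset.sum_le_sum fun ξ hξ => ?_
    have hξ0 : ξ ≠ 0 := (Finset.mem_erase.mp hξ).1
    have habs : Complex.normSq (F ξ) / (N:ℝ)^2 = (‖F ξ‖ / N)^2 := by
      rw [div_pow, Complex.sq_norm]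
    rw [habs, ← pow_mul]
    calc (‖F ξ‖ / N)^(2*2) = ((‖F ξ‖ / N)^2) * (‖F ξ‖ / N)^2 := by ring
    _ ≤ fourierBias N A ^ 2 * (‖F ξ‖ / N)^2 := by
        refine mul_le_mul_of_nonneg_right ?_ (by positivity)
        exact pow_le_pow_left₀ (by positivity) (hbias ξ hξ0) 2
  refine step2.trans ?_
  refine mul_le_mul_of_nonneg_left ?_ (by positivity)
  have : ∑ ξ ∈ Finset.univ.erase (0 : ZMod N), Complex.normSq (F ξ) / (N:ℝ)^2
      ≤ ∑ ξ : ZMod N, Complex.normSq (F ξ) / (N:ℝ)^2 :=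
    Finset.sum_le_sum_of_subset_of_nonneg (Finset.erase_subset _ _)
      (fun ξ _ _ => div_nonneg (Complex.normSq_nonneg _) (by positivity))
  refine this.trans ?_
  rw [← Finset.sum_div, parsevalR]
  rw [show (N : ℝ) * (A.card : ℝ) / (N:ℝ)^2 = (A.card : ℝ) / N by field_simp]
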